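/- Let B be an n×n B-matrix and let Λ'_n = diag(1,...,1,0) be the n×n diagonal matrix with n−1 ones. Then for every λ ∈ ℂ there exist invertible n×n complex matrices P and Q such that P(Λ'_n + λB)Q = Λ'_n and P B Q = B. -/

import Mathlib

open Matrix

/-- The inductive family of `B` matrices from the appendix: the `1 × 1` zero
matrix is a `B` matrix, and a `B` matrix can be enlarged by bordering it with a
zero column (resp. zero row) and a row `r` (resp. column `c`) that raises the
rank to full. -/
inductive IsBMatrix : {n : ℕ} → Matrix (Fin n) (Fin n) ℂ → Prop where
  | base : IsBMatrix (0 : Matrix (Fin 1) (Fin 1) ℂ)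
  | row {n : ℕ} (B : Matrix (Fin n) (Fin n) ℂ) (r : Matrix (Fin 1) (Fin n) ℂ) :
      IsBMatrix B → B.rank = n - 1 → (Matrix.fromRows r B).rank = n →
      IsBMatrix (Matrix.of fun i j : Fin (n + 1) =>
        if hi : i = 0 then
          (if hj : j = 0 then (0 : ℂ) else r 0 (j.pred hj))
        else
          (if hj : j = 0 then (0 : ℂ) else B (i.pred hi) (j.pred hj)))
  | col {n : ℕ} (B : Matrix (Fin n) (Fin n) ℂ) (c : Matrix (Fin n) (Fin 1) ℂ) :
      IsBMatrix B → B.rank = n - 1 → (Matrix.fromCols c B).rank = n →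
      IsBMatrix (Matrix.of fun i j : Fin (n + 1) =>
        if hi : i = 0 then (0 : ℂ)
        else
          (if hj : j = 0 then c (i.pred hi) 0 else B (i.pred hi) (j.pred hj)))

/-- `Λ'_n`, the `n × n` diagonal matrix with `n - 1` ones followed by one zero. -/
noncomputable def LambdaP (n : ℕ) : Matrix (Fin n) (Fin n) ℂ :=
  Matrix.diagonal (fun i : Fin n => if (i : ℕ) = n - 1 then (0 : ℂ) else 1)

def splitE (n : ℕ) : Fin (n + 1) ≃ Fin 1 ⊕ Fin n where
  toFun i := if h : i = 0 then Sum.inl 0 else Sum.inr (i.pred h)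
  invFun := Sum.elim (fun _ => (0 : Fin (n + 1))) Fin.succ
  left_inv i := by
    by_cases h : i = 0
    · simp [h]
    · simp [h]
  right_inv x := by
    rcases x with x | j
    · simp [Subsingleton.elim x 0]
    · simp [Fin.succ_ne_zero]

lemma lambdaP_one : LambdaP 1 = 0 := by
  ext i j
  fin_cases i; fin_cases j
  simp [LambdaP]

lemma lambdaP_succ {n : ℕ} (hn : 0 < n) :
    LambdaP (n + 1) =
      (fromBlocks 1 0 0 (LambdaP n)).submatrix (splitE n) (splitE n) := by
  ext i j
  simp only [Matrix.submatrix_apply, splitE, Equiv.coe_fn_mk]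
  by_cases hi : i = 0 <;> by_cases hj : j = 0
  · subst hi; subst hj
    have : (0 : ℕ) ≠ n + 1 - 1 := by omega
    simp [LambdaP, Matrix.diagonal_apply, this]
    exact if_neg (by omega)
  · subst hi
    simp only [dif_pos rfl, dif_neg hj, Matrix.fromBlocks_apply₁₂, Matrix.zero_apply]
    simp [LambdaP, Matrix.diagonal_apply, Ne.symm hj]
  · subst hj
    simp only [dif_pos rfl, dif_neg hi, Matrix.fromBlocks_apply₂₁, Matrix.zero_apply]
    simp [LambdaP, Matrix.diagonal_apply, hi]
  · simp only [dif_neg hi, dif_neg hj, Matrix.fromBlocks_apply₂₂]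
    have hi' : (i : ℕ) ≠ 0 := fun h => hi (Fin.ext h)
    have hiLt := i.isLt
    have hpred : (i.pred hi = j.pred hj) ↔ i = j := by
      constructor
      · intro h; have := congrArg Fin.succ h; simpa using this
      · intro h; subst h; rfl
    by_cases hij : i = j
    · subst hij
      have hv : ((i.pred hi : ℕ) = n - 1) ↔ ((i : ℕ) = n + 1 - 1) := by
        rw [Fin.coe_pred]; omega
      simp only [LambdaP, Matrix.diagonal_apply_eq, Fin.coe_pred]
      by_cases hc : (i : ℕ) = n + 1 - 1
      · rw [if_pos hc, if_pos (show (i : ℕ) - 1 = n - 1 by omega)]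
      · rw [if_neg hc, if_neg (show ¬((i : ℕ) - 1 = n - 1) by omega)]
    · simp only [LambdaP]
      rw [Matrix.diagonal_apply_ne _ hij, Matrix.diagonal_apply_ne _ (fun h => hij (hpred.mp h))]

lemma rowMatrix_eq {n : ℕ} (B : Matrix (Fin n) (Fin n) ℂ) (r : Matrix (Fin 1) (Fin n) ℂ) :
    (Matrix.of fun i j : Fin (n + 1) =>
        if hi : i = 0 then
          (if hj : j = 0 then (0 : ℂ) else r 0 (j.pred hj))
        else
          (if hj : j = 0 then (0 : ℂ) else B (i.pred hi) (j.pred hj))) =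
      (fromBlocks 0 r 0 B).submatrix (splitE n) (splitE n) := by
  ext i j
  simp only [Matrix.of_apply, Matrix.submatrix_apply, splitE, Equiv.coe_fn_mk]
  by_cases hi : i = 0 <;> by_cases hj : j = 0 <;>
    simp [hi, hj, fromBlocks]

lemma colMatrix_eq {n : ℕ} (B : Matrix (Fin n) (Fin n) ℂ) (c : Matrix (Fin n) (Fin 1) ℂ) :
    (Matrix.of fun i j : Fin (n + 1) =>
        if hi : i = 0 then (0 : ℂ)
        else
          (if hj : j = 0 then c (i.pred hi) 0 else B (i.pred hi) (j.pred hj))) =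
      (fromBlocks 0 0 c B).submatrix (splitE n) (splitE n) := by
  ext i j
  simp only [Matrix.of_apply, Matrix.submatrix_apply, splitE, Equiv.coe_fn_mk]
  by_cases hi : i = 0 <;> by_cases hj : j = 0 <;>
    simp [hi, hj, fromBlocks]

lemma exists_mulVec_eq {m : Type*} [Fintype m] {n : ℕ} (M : Matrix (Fin n) m ℂ)
    (h : M.rank = n) (x : Fin n → ℂ) : ∃ y, M.mulVec y = x := by
  have htop : LinearMap.range M.mulVecLin = ⊤ := by
    apply Submodule.eq_top_of_finrank_eq
    rw [Module.finrank_fin_fun]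
    simpa [Matrix.rank] using h
  have : x ∈ LinearMap.range M.mulVecLin := htop ▸ Submodule.mem_top
  obtain ⟨y, hy⟩ := this
  exact ⟨y, by simpa [Matrix.mulVecLin_apply] using hy⟩

lemma transfer {N : ℕ} {m : Type*} [Fintype m] [DecidableEq m] (e : Fin N ≃ m)
    (L B : Matrix m m ℂ) (lam : ℂ)
    (h : ∃ P Q : Matrix m m ℂ, IsUnit P ∧ IsUnit Q ∧
        P * (L + lam • B) * Q = L ∧ P * B * Q = B) :
    ∃ P Q : Matrix (Fin N) (Fin N) ℂ, IsUnit P ∧ IsUnit Q ∧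
      P * (L.submatrix e e + lam • B.submatrix e e) * Q = L.submatrix e e ∧
      P * B.submatrix e e * Q = B.submatrix e e := by
  obtain ⟨P, Q, hP, hQ, h1, h2⟩ := h
  have hsum : L.submatrix e e + lam • B.submatrix e e = (L + lam • B).submatrix e e := by
    ext i j; simp
  refine ⟨P.submatrix e e, Q.submatrix e e, ?_, ?_, ?_, ?_⟩
  · rw [Matrix.isUnit_iff_isUnit_det, Matrix.det_submatrix_equiv_self,
      ← Matrix.isUnit_iff_isUnit_det]
    exact hP
  · rw [Matrix.isUnit_iff_isUnit_det, Matrix.det_submatrix_equiv_self,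
      ← Matrix.isUnit_iff_isUnit_det]
    exact hQ
  · rw [hsum, Matrix.submatrix_mul_equiv, Matrix.submatrix_mul_equiv, h1]
  · rw [Matrix.submatrix_mul_equiv, Matrix.submatrix_mul_equiv, h2]

lemma fromBlocks_congr {l m n o : Type*} {α : Type*}
    {A A' : Matrix n l α} {B B' : Matrix n m α} {C C' : Matrix o l α} {D D' : Matrix o m α}
    (hA : A = A') (hB : B = B') (hC : C = C') (hD : D = D') :
    fromBlocks A B C D = fromBlocks A' B' C' D' := by
  subst hA; subst hB; subst hC; subst hD; rfl

lemma blockRow {n : ℕ} (hn : 0 < n) (L B : Matrix (Fin n) (Fin n) ℂ)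
    (r : Matrix (Fin 1) (Fin n) ℂ) (lam : ℂ)
    (hBr : B.rank = n - 1) (hfull : (fromRows r B).rank = n)
    (P Q : Matrix (Fin n) (Fin n) ℂ) (hP : IsUnit P) (hQ : IsUnit Q)
    (h1 : P * (L + lam • B) * Q = L) (h2 : P * B * Q = B) :
    ∃ P' Q' : Matrix (Fin 1 ⊕ Fin n) (Fin 1 ⊕ Fin n) ℂ, IsUnit P' ∧ IsUnit Q' ∧
      P' * (fromBlocks 1 0 0 L + lam • fromBlocks 0 r 0 B) * Q' = fromBlocks 1 0 0 L ∧
      P' * fromBlocks 0 r 0 B * Q' = fromBlocks 0 r 0 B := by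
  have hPd := (Matrix.isUnit_iff_isUnit_det P).mp hP
  have hQd := (Matrix.isUnit_iff_isUnit_det Q).mp hQ
  have hQiQ : Q⁻¹ * Q = 1 := Matrix.nonsing_inv_mul Q hQd
  have hPPi : P * P⁻¹ = 1 := Matrix.mul_nonsing_inv P hPd
  have hPiP : P⁻¹ * P = 1 := Matrix.nonsing_inv_mul P hPd
  -- decompose r * Q⁻¹ in terms of r and the rows of B
  have hrankT : ((fromRows r B)ᵀ).rank = n := by rw [Matrix.rank_transpose]; exact hfull
  obtain ⟨y, hy⟩ := exists_mulVec_eq ((fromRows r B)ᵀ) hrankT (fun j => (r * Q⁻¹) 0 j)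
  set α := y (Sum.inl 0) with hαdef
  set s : Matrix (Fin 1) (Fin n) ℂ := Matrix.of (fun _ k => y (Sum.inr k)) with hsdef
  have hdecomp : α • r + s * B = r * Q⁻¹ := by
    ext i j
    have hi0 : i = 0 := Subsingleton.elim i 0
    subst hi0
    have hj := congrFun hy j
    rw [Matrix.mulVec_transpose] at hj
    simp only [Matrix.vecMul, dotProduct, Fintype.sum_sum_type,
      Matrix.fromRows, Matrix.of_apply, Sum.elim_inl, Sum.elim_inr,
      Finset.univ_unique, Finset.sum_singleton] at hj
    simp only [Matrix.add_apply, Matrix.smul_apply, Matrix.mul_apply, hsdef,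
      Matrix.of_apply, smul_eq_mul]
    conv_rhs => rw [← Matrix.mul_apply]
    rw [← hj]
    rfl
  have hBQ : B * Q = P⁻¹ * B := by
    calc B * Q = (P⁻¹ * P) * B * Q := by rw [hPiP, Matrix.one_mul]
    _ = P⁻¹ * (P * B * Q) := by rw [Matrix.mul_assoc, Matrix.mul_assoc, Matrix.mul_assoc]
    _ = P⁻¹ * B := by rw [h2]
  have hα : α ≠ 0 := by
    intro h0
    have hsB : s * B = r * Q⁻¹ := by rw [← hdecomp, h0, zero_smul, zero_add]
    have hr : r = (s * P⁻¹) * B := by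
      calc r = r * (Q⁻¹ * Q) := by rw [hQiQ, Matrix.mul_one]
      _ = (s * B) * Q := by rw [← Matrix.mul_assoc, hsB]
      _ = s * (B * Q) := by rw [Matrix.mul_assoc]
      _ = (s * P⁻¹) * B := by rw [hBQ, Matrix.mul_assoc]
    have hle : (fromRows r B).rank ≤ B.rank := by
      have : fromRows r B = fromRows (s * P⁻¹) (1 : Matrix (Fin n) (Fin n) ℂ) * B := by
        rw [Matrix.fromRows_mul, Matrix.one_mul, ← hr]
      rw [this]
      exact Matrix.rank_mul_le_right _ _
    rw [hfull, hBr] at hle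
    omega
  set C := L + lam • B with hC
  set v : Matrix (Fin 1) (Fin n) ℂ := -(α⁻¹ • (s * C * Q)) - lam • (r * Q) with hv
  refine ⟨fromBlocks (α • 1) s 0 P, fromBlocks (α⁻¹ • 1) v 0 Q, ?_, ?_, ?_, ?_⟩
  · rw [Matrix.isUnit_iff_isUnit_det, Matrix.det_fromBlocks_zero₂₁]
    have : (α • (1 : Matrix (Fin 1) (Fin 1) ℂ)).det = α := by
      simp [Matrix.det_fin_one]
    rw [this]
    exact (isUnit_iff_ne_zero.mpr hα).mul hPd
  · rw [Matrix.isUnit_iff_isUnit_det, Matrix.det_fromBlocks_zero₂₁]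
    have : (α⁻¹ • (1 : Matrix (Fin 1) (Fin 1) ℂ)).det = α⁻¹ := by
      simp [Matrix.det_fin_one]
    rw [this]
    exact (isUnit_iff_ne_zero.mpr (inv_ne_zero hα)).mul hQd
  · have hsum : fromBlocks (1 : Matrix (Fin 1) (Fin 1) ℂ) 0 0 L + lam • fromBlocks 0 r 0 B =
        fromBlocks 1 (lam • r) 0 C := by
      rw [Matrix.fromBlocks_smul, Matrix.fromBlocks_add]
      simp [hC]
    rw [hsum, Matrix.fromBlocks_multiply, Matrix.fromBlocks_multiply]
    apply fromBlocks_congr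
    · simp [Matrix.smul_mul, Matrix.mul_smul, smul_smul, mul_inv_cancel₀ hα,
        inv_mul_cancel₀ hα]
    · simp only [Matrix.mul_one, Matrix.mul_zero, add_zero, Matrix.zero_mul, zero_add,
        smul_zero, Matrix.smul_mul, Matrix.one_mul, Matrix.mul_smul, smul_smul, hv,
        Matrix.add_mul, smul_sub, smul_neg, mul_inv_cancel₀ hα, one_smul]
      rw [mul_comm lam α]
      abel
    · simp
    · simp only [Matrix.zero_mul, Matrix.mul_zero, add_zero, zero_add, smul_mul_assoc]
      exact h1
  · rw [Matrix.fromBlocks_multiply, Matrix.fromBlocks_multiply]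
    apply fromBlocks_congr
    · simp
    · simp only [Matrix.mul_zero, Matrix.mul_one, add_zero, Matrix.zero_mul, zero_add,
        smul_zero, Matrix.smul_mul, Matrix.one_mul, Matrix.add_mul]
      calc α • (r * Q) + s * B * Q = (α • r + s * B) * Q := by
            rw [Matrix.add_mul, Matrix.smul_mul, Matrix.mul_assoc]
      _ = (r * Q⁻¹) * Q := by rw [hdecomp]
      _ = r := by rw [Matrix.mul_assoc, hQiQ, Matrix.mul_one]
    · simp
    · simp only [Matrix.zero_mul, Matrix.mul_zero, add_zero, zero_add]
      exact h2

lemma isUnit_transpose' {m : Type*} [Fintype m] [DecidableEq m] {A : Matrix m m ℂ}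
    (h : IsUnit A) : IsUnit Aᵀ := by
  rw [Matrix.isUnit_iff_isUnit_det, Matrix.det_transpose]
  exact (Matrix.isUnit_iff_isUnit_det A).mp h

lemma blockCol {n : ℕ} (hn : 0 < n) (L B : Matrix (Fin n) (Fin n) ℂ)
    (c : Matrix (Fin n) (Fin 1) ℂ) (lam : ℂ) (hL : Lᵀ = L)
    (hBr : B.rank = n - 1) (hfull : (fromCols c B).rank = n)
    (P Q : Matrix (Fin n) (Fin n) ℂ) (hP : IsUnit P) (hQ : IsUnit Q)
    (h1 : P * (L + lam • B) * Q = L) (h2 : P * B * Q = B) :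
    ∃ P' Q' : Matrix (Fin 1 ⊕ Fin n) (Fin 1 ⊕ Fin n) ℂ, IsUnit P' ∧ IsUnit Q' ∧
      P' * (fromBlocks 1 0 0 L + lam • fromBlocks 0 0 c B) * Q' = fromBlocks 1 0 0 L ∧
      P' * fromBlocks 0 0 c B * Q' = fromBlocks 0 0 c B := by
  have hBrT : Bᵀ.rank = n - 1 := by rw [Matrix.rank_transpose]; exact hBr
  have hfT : (fromRows cᵀ Bᵀ).rank = n := by
    rw [← Matrix.transpose_fromCols, Matrix.rank_transpose]; exact hfull
  have h1T : Qᵀ * (L + lam • Bᵀ) * Pᵀ = L := by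
    have h := congrArg Matrix.transpose h1
    rw [Matrix.transpose_mul, Matrix.transpose_mul, Matrix.transpose_add,
      Matrix.transpose_smul, hL, ← Matrix.mul_assoc] at h
    exact h
  have h2T : Qᵀ * Bᵀ * Pᵀ = Bᵀ := by
    have h := congrArg Matrix.transpose h2
    rw [Matrix.transpose_mul, Matrix.transpose_mul, ← Matrix.mul_assoc] at h
    exact h
  obtain ⟨P₁, Q₁, hP₁, hQ₁, e1, e2⟩ :=
    blockRow hn L Bᵀ cᵀ lam hBrT hfT Qᵀ Pᵀ (isUnit_transpose' hQ) (isUnit_transpose' hP)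
      h1T h2T
  refine ⟨Q₁ᵀ, P₁ᵀ, isUnit_transpose' hQ₁, isUnit_transpose' hP₁, ?_, ?_⟩
  · have h := congrArg Matrix.transpose e1
    simp only [Matrix.transpose_mul, Matrix.transpose_add, Matrix.transpose_smul,
      Matrix.fromBlocks_transpose, Matrix.transpose_one, Matrix.transpose_zero,
      Matrix.transpose_transpose, hL, ← Matrix.mul_assoc] at h
    exact h
  · have h := congrArg Matrix.transpose e2
    simp only [Matrix.transpose_mul, Matrix.fromBlocks_transpose, Matrix.transpose_zero,
      Matrix.transpose_transpose, ← Matrix.mul_assoc] at h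
    exact h

lemma IsBMatrix.pos : ∀ {n : ℕ} {B : Matrix (Fin n) (Fin n) ℂ}, IsBMatrix B → 0 < n := by
  intro n B h
  cases h with
  | base => norm_num
  | row B r h h1 h2 => exact Nat.succ_pos _
  | col B c h h1 h2 => exact Nat.succ_pos _


theorem exists_ILO_absorbing_B_into_Lambda {n : ℕ}
    (B : Matrix (Fin n) (Fin n) ℂ) (hB : IsBMatrix B) (lam : ℂ) :
    ∃ P Q : Matrix (Fin n) (Fin n) ℂ, IsUnit P ∧ IsUnit Q ∧
      P * (LambdaP n + lam • B) * Q = LambdaP n ∧ P * B * Q = B := by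
  induction hB with
  | base =>
      refine ⟨1, 1, isUnit_one, isUnit_one, ?_, ?_⟩ <;> simp [lambdaP_one]
  | row B r hB hr hf ih =>
      obtain ⟨P, Q, hP, hQ, h1, h2⟩ := ih
      have hn := hB.pos
      rw [rowMatrix_eq, lambdaP_succ hn]
      exact transfer (splitE _) _ _ lam
        (blockRow hn (LambdaP _) B r lam hr hf P Q hP hQ h1 h2)
  | col B c hB hr hf ih =>
      obtain ⟨P, Q, hP, hQ, h1, h2⟩ := ih
      have hn := hB.pos
      rw [colMatrix_eq, lambdaP_succ hn]
      exact transfer (splitE _) _ _ lam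
        (blockCol hn (LambdaP _) B c lam (Matrix.diagonal_transpose _) hr hf P Q hP hQ h1 h2)
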